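/- Let λ < 0, ω ∈ [λ, 0), q ∈ ℝ \ {0}, and 0 < η ≤ -ω/q². Then for all t ≥ 0, 1 - 2η q² (1 - exp(2tλ))/(-2λ) ≥ exp(2ωt). -/

import Mathlib

theorem ou_supermartingale_scalar_inequality
    (lam ω q η : ℝ) (hlam : lam < 0) (hω : ω ∈ Set.Ico lam 0)
    (hq : q ≠ 0) (hη : 0 < η) (hηq : η ≤ -ω / q ^ 2) :
    ∀ t : ℝ, 0 ≤ t →
      1 - 2 * η * q ^ 2 * (1 - Real.exp (2 * t * lam)) / (-2 * lam)
        ≥ Real.exp (2 * ω * t) := by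
  intro t ht
  obtain ⟨hωl, hω0⟩ := hω
  have hq2 : (0:ℝ) < q ^ 2 := by positivity
  have hηω : η * q ^ 2 ≤ -ω := by
    have := (le_div_iff₀ hq2).mp hηq
    linarith
  have hE1 : Real.exp (2 * t * lam) ≤ 1 := by
    rw [Real.exp_le_one_iff]
    nlinarith
  set E := Real.exp (2 * t * lam) with hE
  have hlne : lam ≠ 0 := hlam.ne
  have hr0 : 0 ≤ ω / lam := by
    rw [div_nonneg_iff]; right; exact ⟨hω0.le, hlam.le⟩
  have hr1 : ω / lam ≤ 1 := by
    rw [div_le_one_iff]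
    right; right; exact ⟨hlam, hωl⟩
  have hc := convexOn_exp.2 (Set.mem_univ (2 * t * lam)) (Set.mem_univ (0:ℝ))
      hr0 (by linarith : (0:ℝ) ≤ 1 - ω / lam) (by ring)
  simp only [smul_eq_mul, mul_zero, add_zero, Real.exp_zero, mul_one] at hc
  have harg : ω / lam * (2 * t * lam) = 2 * ω * t := by
    field_simp [hlne]
  rw [harg] at hc
  have key : Real.exp (2 * ω * t) ≤ 1 - (ω / lam) * (1 - E) := by
    nlinarith [hc]
  have hden : (0:ℝ) < -2 * lam := by linarith
  have hD : 2 * η * q ^ 2 * (1 - E) / (-2 * lam) ≤ (ω / lam) * (1 - E) := by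
    rw [div_le_iff₀ hden]
    have h1 : (ω / lam) * (1 - E) * (-2 * lam) = -2 * ω * (1 - E) := by
      field_simp [hlne]
    rw [h1]
    nlinarith [mul_nonneg (sub_nonneg.mpr hE1) (sub_nonneg.mpr hE1)]
  linarith
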